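/- Let A = (Q,Σ,q₀,δ,F) be a DFA. A pair of states (p,q) is synchronized (there exist words x,y,z of equal length ≥ 1 with δ(p,x)=p, δ(p,y)=q, δ(q,z)=q) if and only if both p and q are non-trivial (each admits a nonempty word looping at it) and there exists a nonempty word y with δ(p,y)=q whose length is divisible by |Q|!. -/
import Mathlib

private lemma loop_flatten {α σ : Type*} (A : DFA α σ) {p : σ} {x : List α}
    (h : A.evalFrom p x = p) (k : ℕ) :
    A.evalFrom p (List.flatten (List.replicate k x)) = p := by
  induction k with
  | zero => rfl
  | succ k ih =>
    rw [List.replicate_succ, List.flatten_cons, DFA.evalFrom_of_append, h, ih]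

private lemma len_flatten {α : Type*} (x : List α) (k : ℕ) :
    (List.flatten (List.replicate k x)).length = k * x.length := by
  induction k with
  | zero => simp
  | succ k ih => simp [List.replicate_succ, ih, Nat.succ_mul, Nat.add_comm]

private lemma short_loop {α σ : Type*} [Fintype σ] (A : DFA α σ) (p : σ) :
    ∀ n (x : List α), x.length ≤ n → x ≠ [] → A.evalFrom p x = p →
    ∃ u : List α, u ≠ [] ∧ u.length ≤ Fintype.card σ ∧ A.evalFrom p u = p := by
  intro n
  induction n with
  | zero => intro x hx hne _; simp [List.length_eq_zero_iff.mp (Nat.le_zero.mp hx)] at hne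
  | succ n ih =>
    intro x hx hne hloop
    by_cases hc : x.length ≤ Fintype.card σ
    · exact ⟨x, hne, hc, hloop⟩
    · push_neg at hc
      obtain ⟨r, a, b, c, hsplit, hlen, hb, ha, hbl, hcl⟩ :=
        A.evalFrom_split (le_of_lt hc) hloop
      by_cases hac : a ++ c = []
      · have hae : a = [] := by cases List.append_eq_nil_iff.mp hac; assumption
        have hce : c = [] := by cases List.append_eq_nil_iff.mp hac; assumption
        have hrp : r = p := by rw [← ha, hae]; rfl
        refine ⟨b, hb, by omega, ?_⟩
        rw [← hrp]; exact hbl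
      · have hloop' : A.evalFrom p (a ++ c) = p := by
          rw [DFA.evalFrom_of_append, ha, hcl]
        have hblen : 1 ≤ b.length := List.length_pos_iff.mpr hb
        have hxlen : x.length = a.length + b.length + c.length := by
          rw [hsplit]; simp; omega
        have : (a ++ c).length ≤ n := by
          simp only [List.length_append]; omega
        exact ih (a ++ c) this hac hloop'

private lemma mult_loop {α σ : Type*} [Fintype σ] (A : DFA α σ) (p : σ)
    (h : ∃ x : List α, x ≠ [] ∧ A.evalFrom p x = p) (m : ℕ)
    (hm : (Fintype.card σ).factorial ∣ m) (hm1 : 1 ≤ m) :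
    ∃ w : List α, w.length = m ∧ A.evalFrom p w = p := by
  obtain ⟨x, hne, hloop⟩ := h
  obtain ⟨u, hune, hulen, huloop⟩ := short_loop A p x.length x le_rfl hne hloop
  have hupos : 1 ≤ u.length := List.length_pos_iff.mpr hune
  have hdvd : u.length ∣ m :=
    dvd_trans (Nat.dvd_factorial hupos hulen) hm
  refine ⟨List.flatten (List.replicate (m / u.length) u), ?_, loop_flatten A huloop _⟩
  rw [len_flatten, Nat.div_mul_cancel hdvd]

/-- A pair of states `(p,q)` of a DFA is synchronized iff both states are
non-trivial and some nonempty word of length divisible by `|Q|!` leads from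
`p` to `q`. -/
theorem synchronized_iff {α σ : Type*} [Fintype σ] (A : DFA α σ) (p q : σ) :
    (∃ x y z : List α, x.length = y.length ∧ y.length = z.length ∧
        1 ≤ x.length ∧ A.evalFrom p x = p ∧ A.evalFrom p y = q ∧
        A.evalFrom q z = q) ↔
      ((∃ x : List α, x ≠ [] ∧ A.evalFrom p x = p) ∧
       (∃ z : List α, z ≠ [] ∧ A.evalFrom q z = q) ∧
       (∃ y : List α, y ≠ [] ∧ (Fintype.card σ).factorial ∣ y.length ∧
          A.evalFrom p y = q)) := by
  constructor
  · rintro ⟨x, y, z, hxy, hyz, hx1, hxl, hyl, hzl⟩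
    have hxne : x ≠ [] := by intro h; simp [h] at hx1
    have hzne : z ≠ [] := by
      intro h; rw [h, List.length_nil] at hyz; omega
    have hyne : y ≠ [] := by
      intro h; rw [h, List.length_nil] at hxy; omega
    refine ⟨⟨x, hxne, hxl⟩, ⟨z, hzne, hzl⟩, ?_⟩
    set N := (Fintype.card σ).factorial with hN
    have hNpos : 1 ≤ N := (Fintype.card σ).factorial_pos
    refine ⟨List.flatten (List.replicate (N - 1) x) ++ y, ?_, ?_, ?_⟩
    · exact fun h => hyne (List.append_eq_nil_iff.mp h).2
    · rw [List.length_append, len_flatten, ← hxy]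
      obtain ⟨M, hM⟩ := Nat.exists_eq_succ_of_ne_zero (by omega : N ≠ 0)
      refine ⟨x.length, ?_⟩
      rw [hM, Nat.succ_sub_one]
      rw [Nat.succ_mul]
    · rw [DFA.evalFrom_of_append, loop_flatten A hxl, hyl]
  · rintro ⟨hp, hq, y, hyne, hydvd, hyl⟩
    have hy1 : 1 ≤ y.length := List.length_pos_iff.mpr hyne
    obtain ⟨x, hxlen, hxl⟩ := mult_loop A p hp y.length hydvd hy1
    obtain ⟨z, hzlen, hzl⟩ := mult_loop A q hq y.length hydvd hy1
    exact ⟨x, y, z, by omega, by omega, by omega, hxl, hyl, hzl⟩
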